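/- arXiv:1505.04688 — 3 statements merged into one kernel-verified Lean document; each statement's English description precedes it below -/
import Mathlib

section
/- For all integers i, j ∈ ℤ: the monotone annihilation operator a_i is bounded on F_m with adjoint a_i† and ‖a_i‖ = ‖a_i†‖ = 1; if i ≥ j then a_i† a_j† = 0 and a_j a_i = 0; and if i ≠ j then a_i a_j† = 0. -/
open scoped InnerProductSpace ComplexOrder
open ContinuousLinearMap Filter

set_option maxHeartbeats 2000000

noncomputable section

/-- The monotone Fock space `F_m = ℓ²(Finset ℤ)`, the Hilbert space of square-summable
complex families indexed by the finite subsets of `ℤ`. -/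
abbrev Fm : Type := lp (fun _ : Finset ℤ => ℂ) 2

/-- The canonical orthonormal basis vector `e_A`, for `A` a finite subset of `ℤ`;
`e ∅` is the vacuum vector `Ω`. -/
noncomputable def e (A : Finset ℤ) : Fm := lp.single 2 A 1

/-- `adag` is the family of monotone creation operators: `adag i` sends `e A` to
`e (A ∪ {i})` if `A = ∅` or `i < min A` (equivalently, `i < j` for all `j ∈ A`),
and to `0` otherwise. -/
def CreatesOn (adag : ℤ → (Fm →L[ℂ] Fm)) : Prop :=
  ∀ (i : ℤ) (A : Finset ℤ),
    adag i (e A) = if ∀ j ∈ A, i < j then e (insert i A) else 0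

/-- `a` is the family of monotone annihilation operators: `a i` sends `e A` to
`e (A \ {i})` if `A ≠ ∅` and `i = min A` (equivalently, `i ∈ A` and `i ≤ j` for all
`j ∈ A`), and to `0` otherwise. -/
def AnnihilatesOn (a : ℤ → (Fm →L[ℂ] Fm)) : Prop :=
  ∀ (i : ℤ) (A : Finset ℤ),
    a i (e A) = if i ∈ A ∧ ∀ j ∈ A, i ≤ j then e (A.erase i) else 0

/-- Orthonormality of the basis vectors. -/
lemma inner_e (A B : Finset ℤ) : ⟪e A, e B⟫_ℂ = if A = B then 1 else 0 := by
  rw [e, e, lp.inner_single_left]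
  rcases eq_or_ne A B with h | h
  · subst h; simp [lp.single_apply_self]
  · rw [lp.single_apply_ne 2 B 1 h]
    simp [h]

lemma coord_eq (v : Fm) (B : Finset ℤ) : (v : ∀ _ : Finset ℤ, ℂ) B = ⟪e B, v⟫_ℂ := by
  rw [e, lp.inner_single_left]
  simp [RCLike.inner_apply]

/-- Two bounded operators agreeing on the canonical basis are equal. -/
lemma ext_e {T S : Fm →L[ℂ] Fm} (h : ∀ A, T (e A) = S (e A)) : T = S := by
  refine ContinuousLinearMap.ext fun f => ?_
  have hf := lp.hasSum_single (E := fun _ : Finset ℤ => ℂ) ENNReal.ofNat_ne_top f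
  have key : ∀ A : Finset ℤ, T (lp.single 2 A (f A)) = S (lp.single 2 A (f A)) := by
    intro A
    have h1 : lp.single (E := fun _ : Finset ℤ => ℂ) 2 A (f A * 1) = f A • lp.single 2 A 1 :=
      lp.single_smul (E := fun _ : Finset ℤ => ℂ) 2 A (f A) (1 : ℂ)
    rw [mul_one] at h1
    rw [h1, map_smul, map_smul]
    rw [show (lp.single 2 A 1 : Fm) = e A from rfl, h A]
  have hT := hf.mapL T
  have hS := hf.mapL S
  refine hT.unique ?_
  simpa only [key] using hS

lemma e_ne_zero (A : Finset ℤ) : e A ≠ 0 := by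
  intro h
  have := inner_e A A
  rw [h, inner_zero_right] at this
  simp at this

/-- For all `i, j ∈ ℤ`: the monotone annihilator `a_i` is bounded (it is a continuous
linear map by construction) with adjoint `a_i†` and `‖a_i‖ = ‖a_i†‖ = 1`; if `i ≥ j`
then `a_i† a_j† = 0` and `a_j a_i = 0`; and if `i ≠ j` then `a_i a_j† = 0`. -/
theorem monotone_adjoint_norm_relations
    (a adag : ℤ → (Fm →L[ℂ] Fm))
    (ha : AnnihilatesOn a) (hadag : CreatesOn adag) (i j : ℤ) :
    ContinuousLinearMap.adjoint (a i) = adag i ∧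
    ‖a i‖ = 1 ∧ ‖adag i‖ = 1 ∧
    (i ≥ j → adag i * adag j = 0) ∧
    (i ≥ j → a j * a i = 0) ∧
    (i ≠ j → a i * adag j = 0) := by
  -- adjoint
  have hadj : ContinuousLinearMap.adjoint (a i) = adag i := by
    apply ext_e
    intro A
    apply lp.ext
    funext B
    rw [coord_eq, coord_eq]
    have hL : ⟪e B, ContinuousLinearMap.adjoint (a i) (e A)⟫_ℂ = ⟪a i (e B), e A⟫_ℂ := by
      rw [← ContinuousLinearMap.adjoint_inner_right]
    rw [hL, ha i B, hadag i A]
    by_cases hc : i ∈ B ∧ ∀ k ∈ B, i ≤ k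
    · rw [if_pos hc]
      by_cases hd : ∀ k ∈ A, i < k
      · rw [if_pos hd, inner_e, inner_e]
        by_cases hBA : B.erase i = A
        · have hBeq : B = insert i A := by
            rw [← hBA, Finset.insert_erase hc.1]
          rw [if_pos hBA, if_pos hBeq]
        · rw [if_neg hBA, if_neg (by
            intro hBeq
            apply hBA
            rw [hBeq, Finset.erase_insert (fun hiA => lt_irrefl i (hd i hiA))])]
      · rw [if_neg hd, inner_e, inner_zero_right]
        rw [if_neg (by
          intro hBA
          apply hd
          intro k hk
          have hkB : k ∈ B := by rw [← hBA] at hk; exact Finset.mem_of_mem_erase hk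
          have hki : k ≠ i := by rw [← hBA] at hk; exact Finset.ne_of_mem_erase hk
          exact lt_of_le_of_ne (hc.2 k hkB) (Ne.symm hki))]
    · rw [if_neg hc, inner_zero_left]
      by_cases hd : ∀ k ∈ A, i < k
      · rw [if_pos hd, inner_e]
        rw [if_neg (by
          intro hBeq
          apply hc
          subst hBeq
          refine ⟨Finset.mem_insert_self i A, ?_⟩
          intro k hk
          rcases Finset.mem_insert.mp hk with h | h
          · exact le_of_eq h.symm
          · exact le_of_lt (hd k h))]
      · rw [if_neg hd, inner_zero_right]
  have hstar' : ContinuousLinearMap.adjoint (adag i) = a i := by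
    rw [← hadj, ContinuousLinearMap.adjoint_adjoint]
  -- the projection Q = adag i * a i
  have hQ : ∀ A : Finset ℤ, (adag i * a i) (e A)
      = if i ∈ A ∧ ∀ k ∈ A, i ≤ k then e A else 0 := by
    intro A
    rw [ContinuousLinearMap.mul_apply, ha i A]
    by_cases hc : i ∈ A ∧ ∀ k ∈ A, i ≤ k
    · rw [if_pos hc, if_pos hc, hadag i (A.erase i),
        if_pos (by
          intro k hk
          exact lt_of_le_of_ne (hc.2 k (Finset.mem_of_mem_erase hk))
            (Ne.symm (Finset.ne_of_mem_erase hk))),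
        Finset.insert_erase hc.1]
    · rw [if_neg hc, if_neg hc, map_zero]
  have hQsq : (adag i * a i) * (adag i * a i) = adag i * a i := by
    apply ext_e
    intro A
    rw [ContinuousLinearMap.mul_apply, hQ A]
    by_cases hc : i ∈ A ∧ ∀ k ∈ A, i ≤ k
    · rw [if_pos hc, hQ A, if_pos hc]
    · rw [if_neg hc, map_zero]
  have hQne : adag i * a i ≠ 0 := by
    intro h0
    have h1 := hQ {i}
    rw [h0] at h1
    simp only [ContinuousLinearMap.zero_apply] at h1
    rw [if_pos ⟨Finset.mem_singleton_self i, by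
      intro k hk; rw [Finset.mem_singleton] at hk; omega⟩] at h1
    exact e_ne_zero {i} h1.symm
  have hmul_comp : ∀ T S : Fm →L[ℂ] Fm, T * S = T ∘L S := fun _ _ => rfl
  have hQnorm : ‖adag i * a i‖ = 1 := by
    have hsa : ContinuousLinearMap.adjoint (adag i ∘L a i) = adag i ∘L a i := by
      rw [ContinuousLinearMap.adjoint_comp, hadj, hstar']
    have h2 := norm_adjoint_comp_self (adag i ∘L a i)
    rw [hsa] at h2
    simp only [← hmul_comp] at h2
    rw [hQsq] at h2
    have h3 : 0 < ‖adag i * a i‖ := norm_pos_iff.mpr hQne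
    nlinarith
  have hanorm : ‖a i‖ = 1 := by
    have h1 := norm_adjoint_comp_self (a i)
    rw [hadj, ← hmul_comp, hQnorm] at h1
    nlinarith [norm_nonneg (a i)]
  have hadagnorm : ‖adag i‖ = 1 := by
    rw [← hadj]
    have h3 : ContinuousLinearMap.adjoint (ContinuousLinearMap.adjoint (a i)) = a i :=
      ContinuousLinearMap.adjoint_adjoint (a i)
    have h4 := norm_adjoint_comp_self (ContinuousLinearMap.adjoint (a i))
    rw [h3] at h4
    have h5 : ‖a i ∘L ContinuousLinearMap.adjoint (a i)‖ ≤ ‖a i‖ * ‖ContinuousLinearMap.adjoint (a i)‖ := opNorm_comp_le _ _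
    have h6 := norm_adjoint_comp_self (a i)
    have h7 : ‖ContinuousLinearMap.adjoint (a i) ∘L a i‖ ≤ ‖ContinuousLinearMap.adjoint (a i)‖ * ‖a i‖ := opNorm_comp_le _ _
    nlinarith [norm_nonneg (ContinuousLinearMap.adjoint (a i)), norm_nonneg (a i)]
  refine ⟨hadj, hanorm, hadagnorm, ?_, ?_, ?_⟩
  · -- adag i * adag j = 0 when i ≥ j
    intro hij
    apply ext_e
    intro A
    rw [ContinuousLinearMap.mul_apply, hadag j A, ContinuousLinearMap.zero_apply]
    by_cases hc : ∀ k ∈ A, j < k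
    · rw [if_pos hc, hadag i (insert j A), if_neg (by
        intro h
        have := h j (Finset.mem_insert_self j A)
        omega)]
    · rw [if_neg hc, map_zero]
  · -- a j * a i = 0 when i ≥ j
    intro hij
    apply ext_e
    intro A
    rw [ContinuousLinearMap.mul_apply, ha i A, ContinuousLinearMap.zero_apply]
    by_cases hc : i ∈ A ∧ ∀ k ∈ A, i ≤ k
    · rw [if_pos hc, ha j (A.erase i), if_neg (by
        rintro ⟨hj1, -⟩
        have hji : j ≠ i := Finset.ne_of_mem_erase hj1
        have := hc.2 j (Finset.mem_of_mem_erase hj1)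
        omega)]
    · rw [if_neg hc, map_zero]
  · -- a i * adag j = 0 when i ≠ j
    intro hij
    apply ext_e
    intro A
    rw [ContinuousLinearMap.mul_apply, hadag j A, ContinuousLinearMap.zero_apply]
    by_cases hc : ∀ k ∈ A, j < k
    · rw [if_pos hc, ha i (insert j A), if_neg (by
        rintro ⟨hi1, hi2⟩
        have hiA : i ∈ A := by
          rcases Finset.mem_insert.mp hi1 with h | h
          · exact absurd h hij
          · exact h
        have h1 := hi2 j (Finset.mem_insert_self j A)
        have h2 := hc i hiA
        omega)]
    · rw [if_neg hc, map_zero]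

end
end

section
/- A λ-form is never equal to a π-form: if m, n, m', n' ≥ 0, i_1 < ⋯ < i_m, j_1 > ⋯ > j_n, k_1 < ⋯ < k_{m'}, h_1 > ⋯ > h_{n'} are integers and r > max(k_{m'}, h_1), then a†_{i_1}⋯a†_{i_m} a_{j_1}⋯a_{j_n} ≠ a†_{k_1}⋯a†_{k_{m'}} a_r a†_r a_{h_1}⋯a_{h_{n'}} as operators on F_m. -/
open scoped InnerProductSpace ComplexOrder
open ContinuousLinearMap Filter

noncomputable section

/-- A λ-form: an operator `X = a†_{i_1}⋯a†_{i_m} a_{j_1}⋯a_{j_n}` with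
`i_1 < ⋯ < i_m` and `j_1 > ⋯ > j_n` (the identity `I` when `m = n = 0`). -/
def IsLambdaForm (a adag : ℤ → (Fm →L[ℂ] Fm)) (X : Fm →L[ℂ] Fm) : Prop :=
  ∃ is js : List ℤ, is.Chain' (· < ·) ∧ js.Chain' (· > ·) ∧
    X = (is.map adag).prod * (js.map a).prod

/-- A π-form: an operator `X = a†_{i_1}⋯a†_{i_m} a_k a†_k a_{j_1}⋯a_{j_n}` with
`i_1 < ⋯ < i_m`, `j_1 > ⋯ > j_n`, `k > i_m` and `k > j_1` (equivalently, `k` exceeds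
every index occurring in the increasing and decreasing strings). -/
def IsPiForm (a adag : ℤ → (Fm →L[ℂ] Fm)) (X : Fm →L[ℂ] Fm) : Prop :=
  ∃ (is js : List ℤ) (k : ℤ), is.Chain' (· < ·) ∧ js.Chain' (· > ·) ∧
    (∀ i ∈ is, i < k) ∧ (∀ j ∈ js, j < k) ∧
    X = (is.map adag).prod * (a k * adag k) * (js.map a).prod

lemma cre_apply (adag : ℤ → (Fm →L[ℂ] Fm)) (hadag : CreatesOn adag) :
    ∀ is : List ℤ, is.Pairwise (· < ·) → ∀ B : Finset ℤ,
      ((is.map adag).prod) (e B) =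
        if ∀ i ∈ is, ∀ b ∈ B, i < b then e (is.toFinset ∪ B) else 0 := by
  intro is
  induction is with
  | nil => intro _ B; simp
  | cons i tl ih =>
    intro hp B
    rw [List.pairwise_cons] at hp
    obtain ⟨hi, htl⟩ := hp
    rw [List.map_cons, List.prod_cons, ContinuousLinearMap.mul_apply, ih htl B]
    by_cases Ptl : ∀ i' ∈ tl, ∀ b ∈ B, i' < b
    · rw [if_pos Ptl, hadag i (tl.toFinset ∪ B)]
      by_cases hc : ∀ b ∈ B, i < b
      · rw [if_pos, if_pos]
        · congr 1
          ext x
          simp [or_assoc]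
        · intro j hj b hb
          rcases List.mem_cons.1 hj with rfl | hj
          · exact hc b hb
          · exact Ptl j hj b hb
        · intro j hj
          rcases Finset.mem_union.1 hj with hj | hj
          · exact hi j (List.mem_toFinset.1 hj)
          · exact hc j hj
      · rw [if_neg, if_neg]
        · intro h
          exact hc fun b hb => h i (List.mem_cons_self (a := i) (l := tl)) b hb
        · intro h
          exact hc fun b hb => h b (Finset.mem_union_right _ hb)
    · rw [if_neg Ptl, map_zero, if_neg]
      intro h
      exact Ptl fun i' hi' b hb => h i' (List.mem_cons_of_mem i hi') b hb

lemma ann_apply (a : ℤ → (Fm →L[ℂ] Fm)) (ha : AnnihilatesOn a) :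
    ∀ js : List ℤ, js.Pairwise (· > ·) → ∀ B : Finset ℤ,
      ((js.map a).prod) (e B) =
        if (∀ j ∈ js, j ∈ B) ∧ (∀ b ∈ B, b ∉ js → ∀ j ∈ js, j < b)
        then e (B \ js.toFinset) else 0 := by
  intro js
  induction js with
  | nil => intro _ B; simp
  | cons j tl ih =>
    intro hp B
    rw [List.pairwise_cons] at hp
    obtain ⟨hj, htl⟩ := hp
    rw [List.map_cons, List.prod_cons, ContinuousLinearMap.mul_apply, ih htl B]
    by_cases Ptl : (∀ j' ∈ tl, j' ∈ B) ∧ (∀ b ∈ B, b ∉ tl → ∀ j' ∈ tl, j' < b)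
    · rw [if_pos Ptl, ha j (B \ tl.toFinset)]
      by_cases hc : (∀ j' ∈ j :: tl, j' ∈ B) ∧
          (∀ b ∈ B, b ∉ j :: tl → ∀ j' ∈ j :: tl, j' < b)
      · have hjB : j ∈ B := hc.1 j (List.mem_cons_self (a := j) (l := tl))
        have hjtl : j ∉ tl.toFinset := fun h => lt_irrefl j (hj j (List.mem_toFinset.1 h))
        rw [if_pos, if_pos hc]
        · congr 1
          ext x
          simp only [Finset.mem_erase, Finset.mem_sdiff, List.mem_toFinset, List.toFinset_cons,
            Finset.mem_insert]
          tauto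
        · constructor
          · exact Finset.mem_sdiff.2 ⟨hjB, hjtl⟩
          · intro x hx
            rw [Finset.mem_sdiff, List.mem_toFinset] at hx
            by_cases hxj : x ∈ j :: tl
            · rcases List.mem_cons.1 hxj with h1 | h
              · exact le_of_eq h1.symm
              · exact absurd h hx.2
            · exact le_of_lt (hc.2 x hx.1 hxj j (List.mem_cons_self (a := j) (l := tl)))
      · rw [if_neg, if_neg hc]
        intro hD
        apply hc
        constructor
        · intro j' hj'
          rcases List.mem_cons.1 hj' with rfl | h
          · exact (Finset.mem_sdiff.1 hD.1).1
          · exact Ptl.1 j' h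
        · intro b hb hbnotin j' hj'
          have hbtl : b ∉ tl := fun h => hbnotin (List.mem_cons_of_mem j h)
          rcases List.mem_cons.1 hj' with h1 | h
          · subst h1
            have : j' ≤ b := hD.2 b (Finset.mem_sdiff.2 ⟨hb, fun h => hbtl (List.mem_toFinset.1 h)⟩)
            exact lt_of_le_of_ne this (fun h => hbnotin (h ▸ List.mem_cons_self (a := j') (l := tl)))
          · exact Ptl.2 b hb hbtl j' h
    · rw [if_neg Ptl, map_zero, if_neg]
      intro hc
      apply Ptl
      constructor
      · exact fun j' h => hc.1 j' (List.mem_cons_of_mem j h)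
      · intro b hb hbtl j' hj'
        by_cases hbj : b ∈ j :: tl
        · rcases List.mem_cons.1 hbj with rfl | h
          · exact hj j' hj'
          · exact absurd h hbtl
        · exact hc.2 b hb hbj j' (List.mem_cons_of_mem j hj')


lemma e_injective : Function.Injective e := by
  intro A B h
  by_contra hne
  have h1 : (e A : ∀ _ : Finset ℤ, ℂ) A = 1 := lp.single_apply_self 2 A 1
  have h2 : (e B : ∀ _ : Finset ℤ, ℂ) A = 0 := lp.single_apply_ne 2 B 1 hne
  rw [h, h2] at h1
  simp at h1

/-- Lemma 4.4 (iii): a λ-form is never equal to a π-form. -/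
theorem lambdaForm_ne_piForm
    (a adag : ℤ → (Fm →L[ℂ] Fm))
    (ha : AnnihilatesOn a) (hadag : CreatesOn adag)
    (is js ks hs : List ℤ) (r : ℤ)
    (h1 : is.Chain' (· < ·)) (h2 : js.Chain' (· > ·))
    (h3 : ks.Chain' (· < ·)) (h4 : hs.Chain' (· > ·))
    (hr : ∀ i ∈ ks, i < r) (hr' : ∀ j ∈ hs, j < r) :
    (is.map adag).prod * (js.map a).prod
      ≠ (ks.map adag).prod * (a r * adag r) * (hs.map a).prod := by
  intro heq
  have hp1 : is.Pairwise (· < ·) := List.isChain_iff_pairwise.1 h1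
  have hp2 : js.Pairwise (· > ·) := List.isChain_iff_pairwise.1 h2
  have hp3 : ks.Pairwise (· < ·) := List.isChain_iff_pairwise.1 h3
  have hp4 : hs.Pairwise (· > ·) := List.isChain_iff_pairwise.1 h4
  -- the annihilation string applied to `e (insert s H)` with `s` large gives `e {s}`
  have hann : ∀ s : ℤ, r ≤ s →
      ((hs.map a).prod) (e (insert s hs.toFinset)) = e {s} := by
    intro s hsr
    rw [ann_apply a ha hs hp4, if_pos]
    · congr 1
      ext x
      simp only [Finset.mem_sdiff, Finset.mem_insert, List.mem_toFinset,
        Finset.mem_singleton]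
      constructor
      · rintro ⟨h | h, h2⟩
        · exact h
        · exact absurd h h2
      · intro hx
        exact ⟨Or.inl hx, fun h => by have := hr' x h; omega⟩
    · constructor
      · exact fun j hj => Finset.mem_insert_of_mem (List.mem_toFinset.2 hj)
      · intro b hb hbn j hj
        rcases Finset.mem_insert.1 hb with rfl | hb
        · have := hr' j hj; omega
        · exact absurd (List.mem_toFinset.1 hb) hbn
  -- the π-form applied to `e (insert s H)` for `s > r` gives `e (insert s K)`
  have hRHS : ∀ s : ℤ, r < s →
      ((ks.map adag).prod * (a r * adag r) * (hs.map a).prod)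
        (e (insert s hs.toFinset)) = e (insert s ks.toFinset) := by
    intro s hsr
    rw [ContinuousLinearMap.mul_apply, ContinuousLinearMap.mul_apply,
      ContinuousLinearMap.mul_apply, hann s (le_of_lt hsr), hadag r {s}, if_pos]
    · rw [ha r (insert r {s}), if_pos]
      · rw [Finset.erase_insert (by simp; omega), cre_apply adag hadag ks hp3, if_pos]
        · congr 1
          ext x
          simp only [Finset.mem_union, List.mem_toFinset, Finset.mem_singleton,
            Finset.mem_insert]
          tauto
        · intro i hi b hb
          rw [Finset.mem_singleton] at hb
          subst hb
          have := hr i hi; omega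
      · refine ⟨Finset.mem_insert_self r {s}, fun j hj => ?_⟩
        rcases Finset.mem_insert.1 hj with h1 | hj
        · exact le_of_eq h1.symm
        · rw [Finset.mem_singleton] at hj; omega
    · intro j hj
      rw [Finset.mem_singleton] at hj; omega
  -- the π-form applied to `e (insert r H)` gives `0`
  have hRHS0 : ((ks.map adag).prod * (a r * adag r) * (hs.map a).prod)
      (e (insert r hs.toFinset)) = 0 := by
    rw [ContinuousLinearMap.mul_apply, ContinuousLinearMap.mul_apply,
      ContinuousLinearMap.mul_apply, hann r (le_refl r), hadag r {r}, if_neg, map_zero, map_zero]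
    intro h
    have := h r (Finset.mem_singleton_self r)
    omega
  by_cases hmem : (r + 1) ∈ js
  · -- if `r+1` occurs in `js`, test at `e (insert (r+2) H)`
    have E2 : ((is.map adag).prod * (js.map a).prod) (e (insert (r + 2) hs.toFinset))
        = e (insert (r + 2) ks.toFinset) :=
      (DFunLike.congr_fun heq _).trans (hRHS (r + 2) (by omega))
    rw [ContinuousLinearMap.mul_apply, ann_apply a ha js hp2, if_neg, map_zero] at E2
    · exact e_ne_zero _ E2.symm
    · intro hcond
      have := hcond.1 (r + 1) hmem
      rcases Finset.mem_insert.1 this with h | h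
      · omega
      · have := hr' (r + 1) (List.mem_toFinset.1 h); omega
  · -- otherwise, test at `e (insert (r+1) H)` and `e (insert r H)`
    have E1 : ((is.map adag).prod * (js.map a).prod) (e (insert (r + 1) hs.toFinset))
        = e (insert (r + 1) ks.toFinset) :=
      (DFunLike.congr_fun heq _).trans (hRHS (r + 1) (by omega))
    rw [ContinuousLinearMap.mul_apply, ann_apply a ha js hp2] at E1
    by_cases P1 : (∀ j ∈ js, j ∈ insert (r + 1) hs.toFinset) ∧
        (∀ b ∈ insert (r + 1) hs.toFinset, b ∉ js → ∀ j ∈ js, j < b)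
    swap
    · rw [if_neg P1, map_zero] at E1
      exact e_ne_zero _ E1.symm
    rw [if_pos P1, cre_apply adag hadag is hp1] at E1
    by_cases Q1 : ∀ i ∈ is, ∀ b ∈ insert (r + 1) hs.toFinset \ js.toFinset, i < b
    swap
    · rw [if_neg Q1] at E1
      exact e_ne_zero _ E1.symm
    rw [if_pos Q1] at E1
    have key : is.toFinset ∪ (insert (r + 1) hs.toFinset \ js.toFinset)
        = insert (r + 1) ks.toFinset := e_injective E1
    have hJH : ∀ j ∈ js, j ∈ hs.toFinset := by
      intro j hj
      rcases Finset.mem_insert.1 (P1.1 j hj) with h | h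
      · exact absurd (h ▸ hj) hmem
      · exact h
    have hr1J : (r + 1) ∉ js.toFinset := fun h => hmem (List.mem_toFinset.1 h)
    -- now evaluate the λ-form at `e (insert r H)`
    have E0 : ((is.map adag).prod * (js.map a).prod) (e (insert r hs.toFinset)) = 0 :=
      (DFunLike.congr_fun heq _).trans hRHS0
    have P0 : (∀ j ∈ js, j ∈ insert r hs.toFinset) ∧
        (∀ b ∈ insert r hs.toFinset, b ∉ js → ∀ j ∈ js, j < b) := by
      constructor
      · exact fun j hj => Finset.mem_insert_of_mem (hJH j hj)
      · intro b hb hbn j hj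
        rcases Finset.mem_insert.1 hb with rfl | hb
        · exact hr' j (List.mem_toFinset.1 (hJH j hj))
        · exact P1.2 b (Finset.mem_insert_of_mem hb) hbn j hj
    rw [ContinuousLinearMap.mul_apply, ann_apply a ha js hp2, if_pos P0,
      cre_apply adag hadag is hp1, if_pos] at E0
    · exact e_ne_zero _ E0
    · intro i hi b hb
      rw [Finset.mem_sdiff, Finset.mem_insert] at hb
      rcases hb.1 with hbr | hbH
      · -- b = r : show i < r
        have hi1 : i < r + 1 := Q1 i hi (r + 1)
          (Finset.mem_sdiff.2 ⟨Finset.mem_insert_self _ _, hr1J⟩)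
        have hinK : i ≠ r := by
          intro hir
          have hiK : i ∈ insert (r + 1) ks.toFinset := by
            rw [← key]
            exact Finset.mem_union_left _ (List.mem_toFinset.2 hi)
          rcases Finset.mem_insert.1 hiK with h | h
          · omega
          · have := hr i (List.mem_toFinset.1 h); omega
        omega
      · exact Q1 i hi b (Finset.mem_sdiff.2 ⟨Finset.mem_insert_of_mem hbH, hb.2⟩)


end
end

section
/- The monotone C*-dynamical system is not uniquely ergodic: for each i ∈ ℤ, (a) for every ξ ∈ F_m the Cesàro averages (1/n) ∑_{k=0}^{n−1} α^k(a_i a_i†) ξ converge to P_Ω ξ as n → ∞ (strong operator convergence of the averages to P_Ω), but (b) for every n ≥ 1 one has ‖(1/n) ∑_{k=0}^{n−1} α^k(a_i a_i†) − P_Ω‖ = 1 in operator norm, so the averages do not converge to P_Ω in norm. -/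
open scoped InnerProductSpace ComplexOrder
open ContinuousLinearMap Filter

noncomputable section

/-- The orthogonal projection `P_Ω` of `F_m` onto `ℂΩ`. -/
noncomputable def Pom : Fm →L[ℂ] Fm := (innerSL ℂ (e ∅)).smulRight (e ∅)


lemma e_coord (A B : Finset ℤ) : (e A : ∀ _ : Finset ℤ, ℂ) B = if B = A then 1 else 0 := by
  rcases eq_or_ne B A with rfl | h
  · simp [e, lp.single_apply_self]
  · simp [e, lp.single_apply_ne 2 A 1 h, h]

lemma inner_e_left (A : Finset ℤ) (ξ : Fm) : ⟪e A, ξ⟫_ℂ = ξ A := by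
  rw [e, lp.inner_single_left]
  simp [inner]

lemma single_eq_smul_e (B : Finset ℤ) (c : ℂ) : lp.single 2 B c = c • e B := by
  rw [e, ← lp.single_smul, smul_eq_mul, mul_one]

lemma diag_coord (T : Fm →L[ℂ] Fm) (d : Finset ℤ → ℂ)
    (hT : ∀ A, T (e A) = d A • e A) (ξ : Fm) (A : Finset ℤ) :
    (T ξ : ∀ _ : Finset ℤ, ℂ) A = d A * ξ A := by
  have h1 : HasSum (fun B : Finset ℤ => lp.single 2 B (ξ B)) ξ :=
    lp.hasSum_single (by norm_num) ξ
  have h2 := (((innerSL ℂ (e A)).comp T).hasSum h1 :)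
  have h3 : (fun B : Finset ℤ => ((innerSL ℂ (e A)).comp T) (lp.single 2 B (ξ B)))
      = fun B => if B = A then d A * ξ A else 0 := by
    funext B
    rw [ContinuousLinearMap.comp_apply, single_eq_smul_e, map_smul, hT B, innerSL_apply_apply,
      inner_smul_right, inner_e_left, lp.coeFn_smul, Pi.smul_apply, smul_eq_mul, e_coord]
    by_cases h : B = A
    · subst h; simp [smul_eq_mul]; ring
    · simp [h, show ¬ A = B from fun hh => h hh.symm, smul_eq_mul]
  rw [h3] at h2
  have h4 := (hasSum_ite_eq A (d A * ξ A)).unique h2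
  rw [ContinuousLinearMap.comp_apply, innerSL_apply_apply, inner_e_left] at h4
  exact h4.symm

lemma diag_norm_sq (T : Fm →L[ℂ] Fm) (d : Finset ℤ → ℂ)
    (hT : ∀ A, T (e A) = d A • e A) (ξ : Fm) :
    ‖T ξ‖ ^ (2:ℝ) = ∑' A : Finset ℤ, ‖d A‖ ^ (2:ℝ) * ‖ξ A‖ ^ (2:ℝ) := by
  have h2 : (0:ℝ) < (2 : ENNReal).toReal := by norm_num
  have := lp.norm_rpow_eq_tsum h2 (T ξ)
  simp only [ENNReal.toReal_ofNat] at this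
  rw [this]
  congr 1
  funext A
  rw [diag_coord T d hT ξ A, norm_mul, Real.mul_rpow (norm_nonneg _) (norm_nonneg _)]

lemma lp_norm_sq (ξ : Fm) : ‖ξ‖ ^ (2:ℝ) = ∑' A : Finset ℤ, ‖ξ A‖ ^ (2:ℝ) := by
  have h2 : (0:ℝ) < (2 : ENNReal).toReal := by norm_num
  have := lp.norm_rpow_eq_tsum h2 ξ
  simpa only [ENNReal.toReal_ofNat] using this

lemma lp_summable_sq (ξ : Fm) : Summable (fun A : Finset ℤ => ‖ξ A‖ ^ (2:ℝ)) := by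
  have h2 : (0:ℝ) < (2 : ENNReal).toReal := by norm_num
  have := (lp.memℓp ξ).summable h2
  simpa only [ENNReal.toReal_ofNat] using this

lemma norm_e (A : Finset ℤ) : ‖e A‖ = 1 := by
  have := lp.norm_single (E := fun _ : Finset ℤ => ℂ) (p := 2) (by norm_num)
    A (1:ℂ)
  simpa [e] using this

lemma diag_norm_le (T : Fm →L[ℂ] Fm) (d : Finset ℤ → ℂ)
    (hT : ∀ A, T (e A) = d A • e A) (C : ℝ) (hC : 0 ≤ C) (hd : ∀ A, ‖d A‖ ≤ C) :
    ‖T‖ ≤ C := by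
  refine T.opNorm_le_bound hC fun ξ => ?_
  have key := diag_norm_sq T d hT ξ
  have hle : ‖T ξ‖ ^ (2:ℝ) ≤ (C * ‖ξ‖) ^ (2:ℝ) := by
    rw [key, Real.mul_rpow hC (norm_nonneg _), lp_norm_sq ξ, ← tsum_mul_left]
    have hterm : ∀ A : Finset ℤ, ‖d A‖ ^ (2:ℝ) * ‖ξ A‖ ^ (2:ℝ) ≤ C ^ (2:ℝ) * ‖ξ A‖ ^ (2:ℝ) :=
      fun A => mul_le_mul_of_nonneg_right
        (Real.rpow_le_rpow (norm_nonneg _) (hd A) (by norm_num))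
        (Real.rpow_nonneg (norm_nonneg _) _)
    refine Summable.tsum_le_tsum hterm ?_ ((lp_summable_sq ξ).mul_left _)
    exact Summable.of_nonneg_of_le
      (fun A => mul_nonneg (Real.rpow_nonneg (norm_nonneg _) _)
        (Real.rpow_nonneg (norm_nonneg _) _))
      hterm ((lp_summable_sq ξ).mul_left (C ^ (2:ℝ)))
  rw [show (2:ℝ) = ((2:ℕ):ℝ) by norm_num, Real.rpow_natCast, Real.rpow_natCast] at hle
  nlinarith [norm_nonneg (T ξ), mul_nonneg hC (norm_nonneg ξ)]

/-- The monotone C*-dynamical system is not uniquely ergodic. For each `i ∈ ℤ`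
(recall `α^k(a_i a_i†) = a_{i+k} a_{i+k}†`):
(a) for every `ξ ∈ F_m` the Cesàro averages `(1/n) ∑_{k=0}^{n-1} α^k(a_i a_i†) ξ`
converge to `P_Ω ξ` (strong operator convergence of the averages to `P_Ω`), but
(b) for every `n ≥ 1`, `‖(1/n) ∑_{k=0}^{n-1} α^k(a_i a_i†) − P_Ω‖ = 1` in operator
norm, so the averages do not converge to `P_Ω` in norm. -/
theorem monotone_not_uniquely_ergodic
    (a adag : ℤ → (Fm →L[ℂ] Fm))
    (ha : AnnihilatesOn a) (hadag : CreatesOn adag) (i : ℤ) :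
    (∀ ξ : Fm, Tendsto
      (fun n : ℕ =>
        ((n : ℂ)⁻¹ • ∑ k ∈ Finset.range n, a (i + (k : ℤ)) * adag (i + (k : ℤ))) ξ)
      atTop (nhds (Pom ξ))) ∧
    (∀ n : ℕ, 1 ≤ n →
      ‖(n : ℂ)⁻¹ • ∑ k ∈ Finset.range n, a (i + (k : ℤ)) * adag (i + (k : ℤ)) - Pom‖
        = 1) := by
  classical
  let S : ℕ → (Fm →L[ℂ] Fm) := fun n =>
    (n : ℂ)⁻¹ • ∑ k ∈ Finset.range n, a (i + (k : ℤ)) * adag (i + (k : ℤ))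
  let N : ℕ → Finset ℤ → ℕ := fun n A =>
    ((Finset.range n).filter (fun k : ℕ => ∀ x ∈ A, i + (k : ℤ) < x)).card
  let dd : ℕ → Finset ℤ → ℂ := fun n A =>
    (n : ℂ)⁻¹ * (N n A : ℂ) - (if A = ∅ then 1 else 0)
  -- action of a_j a_j† on basis vectors
  have hTj : ∀ (j : ℤ) (A : Finset ℤ),
      (a j * adag j) (e A) = if ∀ x ∈ A, j < x then e A else 0 := by
    intro j A
    rw [ContinuousLinearMap.mul_apply, hadag j A]
    split_ifs with h
    · have hjA : j ∉ A := fun hj => lt_irrefl j (h j hj)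
      rw [ha j (insert j A), if_pos, Finset.erase_insert hjA]
      refine ⟨Finset.mem_insert_self _ _, fun x hx => ?_⟩
      rcases Finset.mem_insert.1 hx with rfl | hx
      · exact le_rfl
      · exact (h x hx).le
    · simp
  have hSA : ∀ n A, S n (e A) = ((n : ℂ)⁻¹ * (N n A : ℂ)) • e A := by
    intro n A
    show ((n : ℂ)⁻¹ • ∑ k ∈ Finset.range n, a (i + (k : ℤ)) * adag (i + (k : ℤ))) (e A) = _
    rw [ContinuousLinearMap.smul_apply, ContinuousLinearMap.sum_apply]
    have hsum : ∑ k ∈ Finset.range n, (a (i + (k:ℤ)) * adag (i + (k:ℤ))) (e A)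
        = ∑ k ∈ Finset.range n, if ∀ x ∈ A, i + (k:ℤ) < x then e A else 0 :=
      Finset.sum_congr rfl fun k _ => hTj (i + (k:ℤ)) A
    rw [hsum, ← Finset.sum_filter, Finset.sum_const, ← Nat.cast_smul_eq_nsmul ℂ, smul_smul]
  have hPomA : ∀ A, Pom (e A) = (if A = ∅ then (1:ℂ) else 0) • e ∅ := by
    intro A
    rw [Pom, ContinuousLinearMap.smulRight_apply, innerSL_apply_apply, inner_e_left, e_coord]
    by_cases hA : A = ∅
    · subst hA; rfl
    · rw [if_neg (fun h => hA h.symm), if_neg hA]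
  have hD : ∀ n A, (S n - Pom) (e A) = dd n A • e A := by
    intro n A
    rw [ContinuousLinearMap.sub_apply, hSA, hPomA]
    by_cases hA : A = ∅
    · subst hA
      show _ = ((n : ℂ)⁻¹ * (N n (∅:Finset ℤ) : ℂ) - if (∅:Finset ℤ) = ∅ then 1 else 0) • e ∅
      simp [sub_smul]
    · show _ = ((n : ℂ)⁻¹ * (N n A : ℂ) - if A = ∅ then 1 else 0) • e A
      simp [hA, sub_smul]
  have hNle : ∀ n A, N n A ≤ n := fun n A =>
    le_trans (Finset.card_filter_le _ _) (by simp)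
  have hNempty : ∀ n, N n (∅ : Finset ℤ) = n := by
    intro n
    show ((Finset.range n).filter _).card = n
    rw [Finset.filter_true_of_mem (fun k _ => by simp), Finset.card_range]
  have hddnorm : ∀ n A, A ≠ ∅ → ‖dd n A‖ = (N n A : ℝ) / n := by
    intro n A hA
    show ‖(n : ℂ)⁻¹ * (N n A : ℂ) - (if A = ∅ then 1 else 0)‖ = _
    rw [if_neg hA, sub_zero, norm_mul, norm_inv, Complex.norm_natCast, Complex.norm_natCast,
      inv_mul_eq_div]
  have hbound : ∀ n A, ‖dd n A‖ ≤ 1 := by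
    intro n A
    by_cases hA : A = ∅
    · subst hA
      rcases Nat.eq_zero_or_pos n with rfl | hn
      · show ‖((0:ℕ) : ℂ)⁻¹ * (N 0 (∅:Finset ℤ) : ℂ) - (if (∅:Finset ℤ) = ∅ then 1 else 0)‖ ≤ 1
        simp
      · have hn' : ((n:ℕ) : ℂ) ≠ 0 := by exact_mod_cast hn.ne'
        show ‖(n : ℂ)⁻¹ * (N n (∅:Finset ℤ) : ℂ) - (if (∅:Finset ℤ) = ∅ then 1 else 0)‖ ≤ 1
        rw [hNempty n, if_pos rfl, inv_mul_cancel₀ hn', sub_self]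
        simp
    · rw [hddnorm n A hA]
      rcases Nat.eq_zero_or_pos n with rfl | hn
      · simp
      · rw [div_le_one (by exact_mod_cast hn)]
        exact_mod_cast hNle n A
  have hlim : ∀ A, Tendsto (fun n => ‖dd n A‖) atTop (nhds 0) := by
    intro A
    by_cases hA : A = ∅
    · subst hA
      refine Tendsto.congr' ?_ (tendsto_const_nhds (x := (0:ℝ)))
      filter_upwards [eventually_ge_atTop 1] with n hn
      have hn' : ((n:ℕ) : ℂ) ≠ 0 := by
        exact_mod_cast (Nat.one_le_iff_ne_zero.1 hn)
      show (0:ℝ) = ‖(n : ℂ)⁻¹ * (N n (∅:Finset ℤ) : ℂ) - (if (∅:Finset ℤ) = ∅ then 1 else 0)‖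
      rw [hNempty n, if_pos rfl, inv_mul_cancel₀ hn', sub_self, norm_zero]
    · obtain ⟨x₀, hx₀⟩ := Finset.nonempty_iff_ne_empty.2 hA
      have hNc : ∀ n, N n A ≤ (x₀ - i).toNat := by
        intro n
        refine le_trans (Finset.card_le_card (t := Finset.range ((x₀ - i).toNat)) ?_)
          (le_of_eq (Finset.card_range _))
        intro k hk
        rw [Finset.mem_filter] at hk
        rw [Finset.mem_range]
        exact Int.lt_toNat.2 (by linarith [hk.2 x₀ hx₀])
      have h0 : Tendsto (fun n : ℕ => ((x₀ - i).toNat : ℝ) * (1 / n)) atTop (nhds 0) := by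
        simpa using tendsto_one_div_atTop_nhds_zero_nat.const_mul ((x₀ - i).toNat : ℝ)
      refine squeeze_zero (fun n => norm_nonneg _) (fun n => ?_) h0
      rw [hddnorm n A hA]
      rcases Nat.eq_zero_or_pos n with rfl | hn
      · simp
      · rw [mul_one_div]
        gcongr
        exact_mod_cast hNc n
  constructor
  · -- part (a): strong convergence
    intro ξ
    show Tendsto (fun n => S n ξ) atTop (nhds (Pom ξ))
    have hsq : ∀ n, ‖S n ξ - Pom ξ‖ ^ (2:ℝ)
        = ∑' A : Finset ℤ, ‖dd n A‖ ^ (2:ℝ) * ‖ξ A‖ ^ (2:ℝ) := by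
      intro n
      have := diag_norm_sq (S n - Pom) (dd n) (hD n) ξ
      rwa [ContinuousLinearMap.sub_apply] at this
    have hts : Tendsto (fun n => ∑' A : Finset ℤ, ‖dd n A‖ ^ (2:ℝ) * ‖ξ A‖ ^ (2:ℝ))
        atTop (nhds 0) := by
      have hmain := tendsto_tsum_of_dominated_convergence
        (𝓕 := atTop) (f := fun (n : ℕ) (A : Finset ℤ) => ‖dd n A‖ ^ (2:ℝ) * ‖ξ A‖ ^ (2:ℝ))
        (g := fun _ : Finset ℤ => (0:ℝ)) (bound := fun A : Finset ℤ => ‖ξ A‖ ^ (2:ℝ))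
        (lp_summable_sq ξ) ?_ ?_
      · simpa using hmain
      · intro A
        have h2 : Tendsto (fun n => ‖dd n A‖ * ‖dd n A‖) atTop (nhds 0) := by
          simpa using (hlim A).mul (hlim A)
        have h3 : Tendsto (fun n => (‖dd n A‖ * ‖dd n A‖) * ‖ξ A‖ ^ (2:ℝ)) atTop (nhds 0) := by
          simpa using h2.mul_const (‖ξ A‖ ^ (2:ℝ))
        have hr2 : ∀ x : ℝ, x ^ (2:ℝ) = x * x := fun x => by
          rw [show (2:ℝ) = ((2:ℕ):ℝ) by norm_num, Real.rpow_natCast, pow_two]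
        refine h3.congr fun n => ?_
        simp only [hr2]
      · filter_upwards with n
        intro A
        have h1 : ‖dd n A‖ ^ (2:ℝ) ≤ 1 :=
          Real.rpow_le_one (norm_nonneg _) (hbound n A) (by norm_num)
        have h2 : (0:ℝ) ≤ ‖dd n A‖ ^ (2:ℝ) * ‖ξ A‖ ^ (2:ℝ) :=
          mul_nonneg (Real.rpow_nonneg (norm_nonneg _) _) (Real.rpow_nonneg (norm_nonneg _) _)
        rw [Real.norm_of_nonneg h2]
        exact mul_le_of_le_one_left (Real.rpow_nonneg (norm_nonneg _) _) h1
    have hn0 : Tendsto (fun n => ‖S n ξ - Pom ξ‖) atTop (nhds 0) := by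
      have hF : Tendsto (fun n => ‖S n ξ - Pom ξ‖ ^ (2:ℝ)) atTop (nhds 0) := by
        refine hts.congr fun n => (hsq n).symm
      have hsqrt := (Real.continuous_sqrt.tendsto 0).comp hF
      rw [Real.sqrt_zero] at hsqrt
      refine hsqrt.congr fun n => ?_
      rw [Function.comp_apply, show (2:ℝ) = ((2:ℕ):ℝ) by norm_num, Real.rpow_natCast,
        Real.sqrt_sq (norm_nonneg _)]
    rw [tendsto_iff_norm_sub_tendsto_zero]
    exact hn0
  · -- part (b): operator norm equals 1
    intro n hn
    show ‖S n - Pom‖ = 1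
    have hupper : ‖S n - Pom‖ ≤ 1 :=
      diag_norm_le (S n - Pom) (dd n) (hD n) 1 zero_le_one (hbound n)
    have hn' : ((n:ℕ) : ℂ) ≠ 0 := by exact_mod_cast (Nat.one_le_iff_ne_zero.1 hn)
    set A₀ : Finset ℤ := {i + (n : ℤ)} with hA₀def
    have hA₀ : A₀ ≠ ∅ := by simp [hA₀def]
    have hNA₀ : N n A₀ = n := by
      show ((Finset.range n).filter _).card = n
      rw [Finset.filter_true_of_mem, Finset.card_range]
      intro k hk
      intro x hx
      rw [hA₀def, Finset.mem_singleton] at hx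
      subst hx
      have : (k : ℤ) < (n : ℤ) := by exact_mod_cast Finset.mem_range.1 hk
      linarith
    have hdd1 : dd n A₀ = 1 := by
      show (n : ℂ)⁻¹ * (N n A₀ : ℂ) - (if A₀ = ∅ then 1 else 0) = 1
      rw [hNA₀, if_neg hA₀, sub_zero, inv_mul_cancel₀ hn']
    have h1 : (S n - Pom) (e A₀) = e A₀ := by
      rw [hD n A₀, hdd1, one_smul]
    have hlower : (1:ℝ) ≤ ‖S n - Pom‖ := by
      have := (S n - Pom).le_opNorm (e A₀)
      rw [h1, norm_e, mul_one] at this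
      exact this
    exact le_antisymm hupper hlower

end
end
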